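/- For every natural number n ≥ 1 and every real r with 0 < r ≤ 1/4, one has ∫₀^{7r} sin^{n−1}(t) dt ≤ 16ⁿ · ∫₀^r sin^{n−1}(t) dt. -/

import Mathlib

open Real intervalIntegral

theorem stmt_5 (n : ℕ) (hn : 1 ≤ n) (r : ℝ) (hr : 0 < r) (hr' : r ≤ 1 / 4) :
    (∫ t in (0:ℝ)..(7 * r), Real.sin t ^ (n - 1)) ≤
      16 ^ n * ∫ t in (0:ℝ)..r, Real.sin t ^ (n - 1) := by
  obtain ⟨m, rfl⟩ : ∃ m, n = m + 1 := ⟨n - 1, (Nat.succ_pred_eq_of_pos hn).symm⟩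
  simp only [Nat.add_sub_cancel]
  have hpi : (3.14 : ℝ) ≤ π := by linarith [Real.pi_gt_d6]
  have hpi4 : π ≤ 4 := Real.pi_le_four
  have hpipos : (0:ℝ) < π := Real.pi_pos
  -- upper bound on LHS
  have h1 : (∫ t in (0:ℝ)..(7*r), Real.sin t ^ m) ≤ ∫ t in (0:ℝ)..(7*r), t ^ m := by
    apply intervalIntegral.integral_mono_on (by linarith)
    · exact (Real.continuous_sin.pow m).intervalIntegrable _ _
    · exact (continuous_pow m).intervalIntegrable _ _
    · intro t ht
      rcases ht with ⟨ht0, ht1⟩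
      have hsn : 0 ≤ Real.sin t :=
        Real.sin_nonneg_of_nonneg_of_le_pi ht0 (by nlinarith)
      exact pow_le_pow_left₀ hsn (Real.sin_le ht0) m
  -- lower bound on RHS integral
  have h2 : (∫ t in (0:ℝ)..r, (2/π * t) ^ m) ≤ ∫ t in (0:ℝ)..r, Real.sin t ^ m := by
    apply intervalIntegral.integral_mono_on hr.le
    · exact ((continuous_const.mul continuous_id).pow m).intervalIntegrable _ _
    · exact (Real.continuous_sin.pow m).intervalIntegrable _ _
    · intro t ht
      rcases ht with ⟨ht0, ht1⟩
      have : 2/π * t ≤ Real.sin t := Real.mul_le_sin ht0 (by nlinarith)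
      exact pow_le_pow_left₀ (by positivity) this m
  have e1 : (∫ t in (0:ℝ)..(7*r), t ^ m) = (7*r)^(m+1) / (m+1) := by
    rw [integral_pow]; simp
  have e2 : (∫ t in (0:ℝ)..r, (2/π * t) ^ m) = (2/π)^m * (r^(m+1) / (m+1)) := by
    simp only [mul_pow]
    rw [intervalIntegral.integral_const_mul, integral_pow]
    simp
  have key : (7*r)^(m+1) / (m+1) ≤ 16^(m+1) * ((2/π)^m * (r^(m+1) / (m+1))) := by
    have hm1 : (0:ℝ) < (m:ℝ) + 1 := by positivity
    rw [div_le_iff₀ hm1]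
    have h7 : (7:ℝ)^(m+1) ≤ 16^(m+1) * (2/π)^m := by
      have : (7:ℝ) ≤ 32/π := by
        rw [le_div_iff₀ hpipos]; nlinarith
      calc (7:ℝ)^(m+1) = 7 * 7^m := by ring
        _ ≤ 16 * (32/π)^m := by
            have := pow_le_pow_left₀ (by norm_num : (0:ℝ) ≤ 7) this m
            nlinarith [pow_nonneg (by norm_num : (0:ℝ) ≤ 7) m]
        _ = 16^(m+1) * (2/π)^m := by
            have h32 : (32:ℝ)^m = 2^m * 16^m := by rw [← mul_pow]; norm_num
            field_simp [pow_succ]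
            rw [div_pow, div_pow, h32]; ring
    have hrp : (0:ℝ) ≤ r^(m+1) := by positivity
    calc (7*r)^(m+1) = 7^(m+1) * r^(m+1) := by rw [mul_pow]
      _ ≤ (16^(m+1) * (2/π)^m) * r^(m+1) := by
          exact mul_le_mul_of_nonneg_right h7 hrp
      _ = 16^(m+1) * ((2/π)^m * (r^(m+1)/(m+1))) * ((m:ℝ)+1) := by
          field_simp
  calc (∫ t in (0:ℝ)..(7*r), Real.sin t ^ m) ≤ (7*r)^(m+1)/(m+1) := by rw [← e1]; exact h1
    _ ≤ 16^(m+1) * ((2/π)^m * (r^(m+1)/(m+1))) := key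
    _ = 16^(m+1) * ∫ t in (0:ℝ)..r, (2/π * t)^m := by rw [e2]
    _ ≤ 16^(m+1) * ∫ t in (0:ℝ)..r, Real.sin t ^ m := by
        apply mul_le_mul_of_nonneg_left h2 (by positivity)
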